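/- For Δ > 0 let ψ_Δ(θ) = 1 − 2^Δ·(1−θ²)/((1+θ)^{1/Δ} + (1−θ)^{1/Δ})^Δ. Then lim_{θ→0+} ψ_Δ(θ)/(((1+Δ)/(2Δ))·θ²) = 1. -/

import Mathlib

open Filter Topology Set

private lemma hdA (p θ : ℝ) (h : 1 + θ ≠ 0) :
    HasDerivAt (fun x : ℝ => (1 + x) ^ p) (p * (1 + θ) ^ (p - 1)) θ := by
  have h1 : HasDerivAt (fun x : ℝ => 1 + x) 1 θ := (hasDerivAt_id θ).const_add 1
  simpa using h1.rpow_const (Or.inl h)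

private lemma hdB (p θ : ℝ) (h : 1 - θ ≠ 0) :
    HasDerivAt (fun x : ℝ => (1 - x) ^ p) (-(p * (1 - θ) ^ (p - 1))) θ := by
  have h1 : HasDerivAt (fun x : ℝ => 1 - x) (-1) θ := (hasDerivAt_id θ).const_sub 1
  simpa [mul_comm] using h1.rpow_const (Or.inl h)

private lemma key (a : ℝ) :
    Tendsto (fun θ : ℝ => ((1 + θ) ^ a + (1 - θ) ^ a - 2) / θ ^ 2)
      (𝓝[>] (0:ℝ)) (𝓝 (a * (a - 1))) := by
  have hmem : ∀ x ∈ Ioo (0:ℝ) 1, (1 + x ≠ 0 ∧ 1 - x ≠ 0) := by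
    rintro x ⟨h1, h2⟩; constructor <;> nlinarith
  -- second l'Hopital step
  have hdiv2 : Tendsto (fun x : ℝ =>
      (a * ((a-1) * (1 + x) ^ (a-1-1)) + a * ((a-1) * (1 - x) ^ (a-1-1))) / 2)
      (𝓝[>] (0:ℝ)) (𝓝 (a * (a - 1))) := by
    have hc : ContinuousAt (fun x : ℝ =>
        (a * ((a-1) * (1 + x) ^ (a-1-1)) + a * ((a-1) * (1 - x) ^ (a-1-1))) / 2) 0 := by
      have c1 := (hdA (a-1-1) 0 (by norm_num)).continuousAt
      have c2 := (hdB (a-1-1) 0 (by norm_num)).continuousAt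
      exact (((continuousAt_const.mul (continuousAt_const.mul c1)).add
        (continuousAt_const.mul (continuousAt_const.mul c2))).div_const 2)
    have := hc.tendsto.mono_left (nhdsWithin_le_nhds (s := Ioi (0:ℝ)))
    convert this using 2
    norm_num [Real.one_rpow]
  have hstep2 : Tendsto (fun x : ℝ =>
      (a * (1 + x) ^ (a-1) + -(a * (1 - x) ^ (a-1))) / (2 * x))
      (𝓝[>] (0:ℝ)) (𝓝 (a * (a - 1))) := by
    apply HasDerivAt.lhopital_zero_right_on_Ioo (a := 0) (b := 1) one_pos
      (f' := fun x => a * ((a-1) * (1 + x) ^ (a-1-1)) + a * ((a-1) * (1 - x) ^ (a-1-1)))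
      (g' := fun _ => 2)
    · intro x hx
      obtain ⟨h1, h2⟩ := hmem x hx
      have d1 := (hdA (a-1) x h1).const_mul a
      have d2 := ((hdB (a-1) x h2).const_mul a).neg
      have := d1.add d2
      exact this.congr_deriv (by ring)
    · intro x _
      simpa using (hasDerivAt_id x).const_mul (2:ℝ)
    · intro x _; norm_num
    · have hc : ContinuousAt (fun x : ℝ => a * (1 + x) ^ (a-1) + -(a * (1 - x) ^ (a-1))) 0 := by
        have c1 := (hdA (a-1) 0 (by norm_num)).continuousAt
        have c2 := (hdB (a-1) 0 (by norm_num)).continuousAt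
        exact (continuousAt_const.mul c1).add (continuousAt_const.mul c2).neg
      have := hc.tendsto.mono_left (nhdsWithin_le_nhds (s := Ioi (0:ℝ)))
      convert this using 2
      norm_num [Real.one_rpow]
    · have : Tendsto (fun x : ℝ => 2 * x) (𝓝 (0:ℝ)) (𝓝 (2 * 0)) :=
        (continuous_const.mul continuous_id).tendsto 0
      simpa using this.mono_left nhdsWithin_le_nhds
    · exact hdiv2
  apply HasDerivAt.lhopital_zero_right_on_Ioo (a := 0) (b := 1) one_pos
    (f' := fun x => a * (1 + x) ^ (a-1) + -(a * (1 - x) ^ (a-1)))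
    (g' := fun x => 2 * x)
  · intro x hx
    obtain ⟨h1, h2⟩ := hmem x hx
    exact (((hdA a x h1).add (hdB a x h2)).sub_const 2)
  · intro x _
    simpa using hasDerivAt_pow 2 x
  · rintro x ⟨h1, _⟩
    positivity
  · have hc : ContinuousAt (fun x : ℝ => (1 + x) ^ a + (1 - x) ^ a - 2) 0 := by
      have c1 := (hdA a 0 (by norm_num)).continuousAt
      have c2 := (hdB a 0 (by norm_num)).continuousAt
      exact (c1.add c2).sub continuousAt_const
    have := hc.tendsto.mono_left (nhdsWithin_le_nhds (s := Ioi (0:ℝ)))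
    convert this using 2
    norm_num [Real.one_rpow]
  · have : Tendsto (fun x : ℝ => x ^ 2) (𝓝 (0:ℝ)) (𝓝 ((0:ℝ) ^ 2)) :=
      (continuous_pow 2).tendsto 0
    simpa using this.mono_left nhdsWithin_le_nhds
  · exact hstep2

theorem stmt17 (Δ : ℝ) (hΔ : 0 < Δ) :
    Tendsto (fun θ : ℝ =>
        (1 - 2 ^ Δ * (1 - θ ^ 2) / ((1 + θ) ^ (1 / Δ) + (1 - θ) ^ (1 / Δ)) ^ Δ) /
        (((1 + Δ) / (2 * Δ)) * θ ^ 2))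
      (𝓝[>] (0:ℝ)) (𝓝 1) := by
  by_cases hΔ1 : Δ = 1
  · subst hΔ1
    apply Tendsto.congr' (f₁ := fun _ => (1:ℝ))
    · filter_upwards [self_mem_nhdsWithin] with θ (hθ : 0 < θ)
      have hθ2 : θ ^ 2 ≠ 0 := by positivity
      rw [one_div_one]
      simp only [Real.rpow_one]
      field_simp
      ring
    · exact tendsto_const_nhds
  -- main case
  set a : ℝ := 1 / Δ with ha
  set S : ℝ → ℝ := fun θ => (1 + θ) ^ a + (1 - θ) ^ a with hSdef
  have hΔ0 : Δ ≠ 0 := ne_of_gt hΔ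
  have ha0 : a ≠ 0 := by simp [ha, hΔ0]
  have ha1 : a ≠ 1 := by
    intro h
    apply hΔ1
    rw [ha] at h
    field_simp at h
    linarith
  have haa : a * (a - 1) ≠ 0 := mul_ne_zero ha0 (sub_ne_zero.mpr ha1)
  have h2Δ : (0:ℝ) < 2 ^ Δ := Real.rpow_pos_of_pos two_pos Δ
  -- S tends to 2
  have hScont : ContinuousAt S 0 := by
    have c1 := (hdA a 0 (by norm_num)).continuousAt
    have c2 := (hdB a 0 (by norm_num)).continuousAt
    exact c1.add c2
  have hS0 : S 0 = 2 := by norm_num [hSdef, Real.one_rpow]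
  have hS2 : Tendsto S (𝓝[>] (0:ℝ)) (𝓝 2) := by
    have := hScont.tendsto.mono_left (nhdsWithin_le_nhds (s := Ioi (0:ℝ)))
    rwa [hS0] at this
  have h1 : Tendsto (fun θ : ℝ => (S θ - 2) / θ ^ 2) (𝓝[>] (0:ℝ)) (𝓝 (a * (a - 1))) :=
    key a
  -- eventually S θ ≠ 2
  have hne : ∀ᶠ θ in 𝓝[>] (0:ℝ), S θ ≠ 2 := by
    filter_upwards [h1.eventually_ne haa, self_mem_nhdsWithin] with θ hq (hθ : 0 < θ)
    intro hS
    apply hq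
    rw [hS]
    simp
  -- difference quotient composition
  have hd2 : HasDerivAt (fun y : ℝ => y ^ Δ) (Δ * 2 ^ (Δ - 1)) 2 :=
    Real.hasDerivAt_rpow_const (Or.inl two_ne_zero)
  have hslope : Tendsto (fun θ : ℝ => ((S θ) ^ Δ - 2 ^ Δ) / (S θ - 2))
      (𝓝[>] (0:ℝ)) (𝓝 (Δ * 2 ^ (Δ - 1))) := by
    have hsl := hasDerivAt_iff_tendsto_slope.mp hd2
    have hS2' : Tendsto S (𝓝[>] (0:ℝ)) (𝓝[≠] 2) := by
      rw [tendsto_nhdsWithin_iff]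
      exact ⟨hS2, hne⟩
    have := hsl.comp hS2'
    apply this.congr
    intro θ
    simp [slope, Function.comp, div_eq_inv_mul]
  -- combined numerator limit
  have h3 : Tendsto (fun θ : ℝ => ((S θ) ^ Δ - 2 ^ Δ) / θ ^ 2)
      (𝓝[>] (0:ℝ)) (𝓝 (Δ * 2 ^ (Δ - 1) * (a * (a - 1)))) := by
    apply Tendsto.congr' _ (hslope.mul h1)
    filter_upwards [hne, self_mem_nhdsWithin] with θ hθ (hθ0 : 0 < θ)
    have hθ2 : (θ:ℝ) ^ 2 ≠ 0 := by positivity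
    have hs : S θ - 2 ≠ 0 := sub_ne_zero.mpr hθ
    field_simp
  -- numerator with the (1 - θ²) factor
  have h4 : Tendsto (fun θ : ℝ => ((S θ) ^ Δ - 2 ^ Δ * (1 - θ ^ 2)) / θ ^ 2)
      (𝓝[>] (0:ℝ)) (𝓝 (Δ * 2 ^ (Δ - 1) * (a * (a - 1)) + 2 ^ Δ)) := by
    apply Tendsto.congr' _ (h3.add (tendsto_const_nhds (x := (2:ℝ) ^ Δ)))
    filter_upwards [self_mem_nhdsWithin] with θ (hθ0 : 0 < θ)
    have hθ2 : (θ:ℝ) ^ 2 ≠ 0 := by positivity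
    field_simp
    ring
  -- denominator : S θ ^ Δ tends to 2 ^ Δ
  have hSΔ : Tendsto (fun θ : ℝ => (S θ) ^ Δ) (𝓝[>] (0:ℝ)) (𝓝 ((2:ℝ) ^ Δ)) :=
    hS2.rpow_const (Or.inl two_ne_zero)
  have hc0 : (0:ℝ) < (1 + Δ) / (2 * Δ) := by positivity
  have hden : Tendsto (fun θ : ℝ => ((1 + Δ) / (2 * Δ)) * (S θ) ^ Δ) (𝓝[>] (0:ℝ))
      (𝓝 (((1 + Δ) / (2 * Δ)) * 2 ^ Δ)) := hSΔ.const_mul _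
  have hdenne : ((1 + Δ) / (2 * Δ)) * 2 ^ Δ ≠ 0 := by positivity
  have hmain := h4.div hden hdenne
  -- value of the limit is 1
  have hval : (Δ * 2 ^ (Δ - 1) * (a * (a - 1)) + 2 ^ Δ) / (((1 + Δ) / (2 * Δ)) * 2 ^ Δ) = 1 := by
    have h2 : (2:ℝ) ^ (Δ - 1) = 2 ^ Δ / 2 := by
      rw [Real.rpow_sub two_pos, Real.rpow_one]
    rw [h2, ha]
    field_simp
    ring
  rw [hval] at hmain
  -- identify the original function with the rewritten one, eventually
  apply Tendsto.congr' _ hmain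
  filter_upwards [Ioo_mem_nhdsGT_of_mem (by norm_num : (0:ℝ) ∈ Ico (0:ℝ) 1)]
    with θ hθ
  obtain ⟨hθ0, hθ1⟩ := hθ
  have hSpos : 0 < S θ := by
    have := Real.rpow_pos_of_pos (by linarith : (0:ℝ) < 1 + θ) a
    have := Real.rpow_pos_of_pos (by linarith : (0:ℝ) < 1 - θ) a
    simp only [hSdef]
    positivity
  have hSΔpos : 0 < (S θ) ^ Δ := Real.rpow_pos_of_pos hSpos Δ
  have hθ2 : (θ:ℝ) ^ 2 ≠ 0 := by positivity
  show ((S θ) ^ Δ - 2 ^ Δ * (1 - θ ^ 2)) / θ ^ 2 / (((1 + Δ) / (2 * Δ)) * (S θ) ^ Δ)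
      = (1 - 2 ^ Δ * (1 - θ ^ 2) / (S θ) ^ Δ) / (((1 + Δ) / (2 * Δ)) * θ ^ 2)
  rw [div_div, div_eq_div_iff (by positivity) (by positivity)]
  field_simp
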